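/- The vector field F₁₂(x,y,z) = (0, xy, −y²) on ℝ³ is complete, with explicit flow: the solution with initial condition (x₀,y₀,z₀) is t ↦ (0, y₀, −y₀²t + z₀) if x₀ = 0, and t ↦ (x₀, y₀e^{x₀t}, (y₀²/(2x₀))(1 − e^{2x₀t}) + z₀) if x₀ ≠ 0; moreover every non-stationary integral curve is unbounded. -/

import Mathlib

/-- The geodesic field `F₁₂` of `Q₁₂` on `aff(ℝ) ⊕ ℝ`: `(0, xy, −y²)`. -/
def F12 (v : Fin 3 → ℝ) : Fin 3 → ℝ := ![0, v 0 * v 1, -(v 1) ^ 2]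

/-- `F₁₂` is complete, with explicit flow as given, and every
non-stationary integral curve is unbounded. -/
theorem stmt_10 :
    (∀ y₀ z₀ : ℝ,
      (fun t : ℝ => (![0, y₀, -y₀ ^ 2 * t + z₀] : Fin 3 → ℝ)) 0 = ![0, y₀, z₀] ∧
      ∀ t : ℝ, HasDerivAt (fun t : ℝ => (![0, y₀, -y₀ ^ 2 * t + z₀] : Fin 3 → ℝ))
        (F12 ![0, y₀, -y₀ ^ 2 * t + z₀]) t) ∧
    (∀ x₀ y₀ z₀ : ℝ, x₀ ≠ 0 →
      (fun t : ℝ => (![x₀, y₀ * Real.exp (x₀ * t),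
          y₀ ^ 2 / (2 * x₀) * (1 - Real.exp (2 * x₀ * t)) + z₀] : Fin 3 → ℝ)) 0
        = ![x₀, y₀, z₀] ∧
      ∀ t : ℝ, HasDerivAt (fun t : ℝ => (![x₀, y₀ * Real.exp (x₀ * t),
          y₀ ^ 2 / (2 * x₀) * (1 - Real.exp (2 * x₀ * t)) + z₀] : Fin 3 → ℝ))
        (F12 ![x₀, y₀ * Real.exp (x₀ * t),
          y₀ ^ 2 / (2 * x₀) * (1 - Real.exp (2 * x₀ * t)) + z₀]) t) ∧
    (∀ γ : ℝ → Fin 3 → ℝ, (∀ t, HasDerivAt γ (F12 (γ t)) t) →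
      (¬ ∀ t, γ t = γ 0) → ¬ ∃ C, ∀ t, ‖γ t‖ ≤ C) := by
  refine ⟨?_, ?_, ?_⟩
  · intro y₀ z₀
    constructor
    · funext i; fin_cases i <;> simp
    · intro t
      rw [hasDerivAt_pi]
      intro i
      fin_cases i <;> simp [F12]
      · exact hasDerivAt_const t 0
      · exact hasDerivAt_const t y₀
      · simpa using ((hasDerivAt_id t).const_mul (-y₀ ^ 2)).add_const z₀
  · intro x₀ y₀ z₀ hx₀
    have hexpsq : ∀ t : ℝ, Real.exp (2 * x₀ * t) = Real.exp (x₀ * t) ^ 2 := by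
      intro t; rw [sq, ← Real.exp_add]; ring_nf
    constructor
    · funext i; fin_cases i <;> simp
    · intro t
      rw [hasDerivAt_pi]
      intro i
      have h1 : HasDerivAt (fun s : ℝ => x₀ * s) x₀ t := by
        simpa using (hasDerivAt_id t).const_mul x₀
      have h2 : HasDerivAt (fun s : ℝ => 2 * x₀ * s) (2 * x₀) t := by
        simpa using (hasDerivAt_id t).const_mul (2 * x₀)
      fin_cases i <;> simp [F12]
      · exact hasDerivAt_const t x₀
      · have := (h1.exp).const_mul y₀
        exact this.congr_deriv (by ring)
      · have he : HasDerivAt (fun s : ℝ => 1 - Real.exp (2 * x₀ * s))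
            (-(Real.exp (2 * x₀ * t) * (2 * x₀))) t := by
          simpa using (h2.exp).const_sub 1
        have := he.const_mul (y₀ ^ 2 / (2 * x₀))
        refine this.congr_deriv ?_
        rw [hexpsq t]
        field_simp
  · rintro γ hγ hns ⟨C, hC⟩
    have hcomp : ∀ (t : ℝ) (i : Fin 3), HasDerivAt (fun s => γ s i) (F12 (γ t) i) t :=
      fun t i => (hasDerivAt_pi.mp (hγ t)) i
    have h0 : ∀ t : ℝ, HasDerivAt (fun s => γ s 0) 0 t := by
      intro t; simpa [F12] using hcomp t 0
    have hxconst : ∀ t : ℝ, γ t 0 = γ 0 0 := fun t =>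
      is_const_of_deriv_eq_zero (fun s => (h0 s).differentiableAt)
        (fun s => (h0 s).deriv) t 0
    set x₀ := γ 0 0 with hx₀def
    have hy : ∀ t : ℝ, HasDerivAt (fun s => γ s 1) (x₀ * γ t 1) t := by
      intro t
      have := hcomp t 1
      simp only [F12] at this
      simpa [hxconst t] using this
    -- y t = y 0 * exp (x₀ t)
    have hkey : ∀ t : ℝ, γ t 1 = γ 0 1 * Real.exp (x₀ * t) := by
      have hexp : ∀ t : ℝ, HasDerivAt (fun s : ℝ => Real.exp (-(x₀ * s)))
          (Real.exp (-(x₀ * t)) * (-x₀)) t := by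
        intro t
        simpa using (((hasDerivAt_id t).const_mul x₀).neg).exp
      have hg : ∀ t : ℝ, HasDerivAt (fun s => γ s 1 * Real.exp (-(x₀ * s))) 0 t := by
        intro t
        have := (hy t).mul (hexp t)
        exact this.congr_deriv (by ring)
      have hconst : ∀ t : ℝ, γ t 1 * Real.exp (-(x₀ * t)) = γ 0 1 := by
        intro t
        have := is_const_of_deriv_eq_zero (f := fun s => γ s 1 * Real.exp (-(x₀ * s)))
          (fun s => (hg s).differentiableAt) (fun s => (hg s).deriv) t 0
        simpa using this
      intro t
      have h := hconst t
      have hne : Real.exp (-(x₀ * t)) ≠ 0 := (Real.exp_pos _).ne'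
      field_simp [Real.exp_neg] at h ⊢
      rw [← h, mul_assoc, ← Real.exp_add, neg_add_cancel, Real.exp_zero, mul_one]
    have hz : ∀ t : ℝ, HasDerivAt (fun s => γ s 2) (-(γ t 1) ^ 2) t := by
      intro t; simpa [F12] using hcomp t 2
    by_cases hy0 : γ 0 1 = 0
    · -- stationary: contradiction with hns
      apply hns
      intro t
      have hy1 : ∀ s : ℝ, γ s 1 = 0 := by
        intro s; rw [hkey s, hy0, zero_mul]
      have hz0 : ∀ s : ℝ, HasDerivAt (fun u => γ u 2) 0 s := by
        intro s; simpa [hy1 s] using hz s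
      have hzc : γ t 2 = γ 0 2 :=
        is_const_of_deriv_eq_zero (fun s => (hz0 s).differentiableAt)
          (fun s => (hz0 s).deriv) t 0
      funext i
      fin_cases i
      · exact hxconst t
      · exact (hy1 t).trans (hy1 0).symm
      · exact hzc
    · have hCnn : (0:ℝ) ≤ C := le_trans (norm_nonneg _) (hC 0)
      have habs : ∀ (t : ℝ) (i : Fin 3), |γ t i| ≤ C := by
        intro t i
        calc |γ t i| = ‖γ t i‖ := rfl
          _ ≤ ‖γ t‖ := norm_le_pi_norm (γ t) i
          _ ≤ C := hC t
      by_cases hx0 : x₀ = 0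
      · -- y constant nonzero, z linear unbounded
        have hy1 : ∀ s : ℝ, γ s 1 = γ 0 1 := by
          intro s; rw [hkey s, hx0]; simp
        have hzlin : ∀ t : ℝ, γ t 2 = γ 0 2 - γ 0 1 ^ 2 * t := by
          have hg : ∀ t : ℝ, HasDerivAt (fun s => γ s 2 + γ 0 1 ^ 2 * s) 0 t := by
            intro t
            have := (hz t).add ((hasDerivAt_id t).const_mul (γ 0 1 ^ 2))
            exact this.congr_deriv (by rw [hy1 t]; ring)
          intro t
          have := is_const_of_deriv_eq_zero (f := fun s => γ s 2 + γ 0 1 ^ 2 * s)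
            (fun s => (hg s).differentiableAt) (fun s => (hg s).deriv) t 0
          simp at this
          linarith
        have hy2pos : 0 < γ 0 1 ^ 2 := by positivity
        set t := -((C + |γ 0 2| + 1) / γ 0 1 ^ 2) with ht
        have hval : γ t 2 = γ 0 2 + (C + |γ 0 2| + 1) := by
          rw [hzlin t, ht]
          field_simp
          ring
        have h1 : |γ t 2| ≤ C := habs t 2
        have h2 : γ 0 2 ≥ -|γ 0 2| := neg_abs_le _
        have h3 : γ t 2 ≤ |γ t 2| := le_abs_self _
        linarith
      · -- y exponential unbounded
        have hy0' : 0 < |γ 0 1| := abs_pos.mpr hy0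
        set s := (C + 1) / |γ 0 1| with hs
        set t := s / x₀ with ht
        have hxt : x₀ * t = s := by rw [ht]; field_simp
        have hval : |γ t 1| = |γ 0 1| * Real.exp s := by
          rw [hkey t, hxt, abs_mul, abs_of_pos (Real.exp_pos s)]
        have hexps : s + 1 ≤ Real.exp s := Real.add_one_le_exp s
        have : |γ 0 1| * (s + 1) ≤ |γ 0 1| * Real.exp s :=
          mul_le_mul_of_nonneg_left hexps (le_of_lt hy0')
        have hsum : |γ 0 1| * (s + 1) = C + 1 + |γ 0 1| := by
          rw [hs]; field_simp
        have h1 : |γ t 1| ≤ C := habs t 1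
        rw [hval] at h1
        linarith
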